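/- Let G be a partially ordered group with identity e and positive cone G⁺ = {x ∈ G : x > e}. Let 𝒥 be a set of nonempty finite subsets of G⁺ and let σ_𝒥 be the associated density. Let A and B be subsets of G⁺ with σ_𝒥(A) + σ_𝒥(B) > 1. If x ∈ G⁺ and the open interval (e, x) belongs to 𝒥, then there exist a ∈ A and b ∈ B with ab = x. -/

import Mathlib

/-- The density `σ_𝒥(A) = inf { |A ∩ J| / |J| : J ∈ 𝒥 }` determined by a
collection `𝒥` of subsets of `X`. -/
noncomputable def densJ {X : Type*} (𝒥 : Set (Set X)) (A : Set X) : ℝ :=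
  sInf ((fun J => ((A ∩ J).ncard : ℝ) / (J.ncard : ℝ)) '' 𝒥)

/-- In a partially ordered group `G` with positive cone `G⁺ = {x : 1 < x}`,
if `A, B ⊆ G⁺` satisfy `σ_𝒥(A) + σ_𝒥(B) > 1`, and `x ∈ G⁺` has
`(e, x) ∈ 𝒥`, then `x = ab` for some `a ∈ A`, `b ∈ B`. -/
theorem exists_mul_eq_of_one_lt_add_densJ
    {G : Type*} [Group G] [PartialOrder G]
    [CovariantClass G G (· * ·) (· ≤ ·)]
    [CovariantClass G G (Function.swap (· * ·)) (· ≤ ·)]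
    (𝒥 : Set (Set G))
    (h𝒥 : ∀ J ∈ 𝒥, J.Nonempty ∧ J.Finite ∧ J ⊆ Set.Ioi (1 : G))
    (A B : Set G) (hA : A ⊆ Set.Ioi 1) (hB : B ⊆ Set.Ioi 1)
    (hd : 1 < densJ 𝒥 A + densJ 𝒥 B)
    (x : G) (hx : x ∈ Set.Ioi (1 : G)) (hIoo : Set.Ioo (1 : G) x ∈ 𝒥) :
    ∃ a ∈ A, ∃ b ∈ B, a * b = x := by
  set J : Set G := Set.Ioo (1 : G) x with hJ
  obtain ⟨hne, hfin, -⟩ := h𝒥 J hIoo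
  have hJ0 : 0 < (J.ncard : ℝ) := by
    have := (Set.ncard_pos hfin).2 hne
    exact_mod_cast this
  have hbdd : BddBelow ((fun J => ((A ∩ J).ncard : ℝ) / (J.ncard : ℝ)) '' 𝒥) := by
    refine ⟨0, ?_⟩
    rintro _ ⟨J', -, rfl⟩
    positivity
  have hbddB : BddBelow ((fun J => ((B ∩ J).ncard : ℝ) / (J.ncard : ℝ)) '' 𝒥) := by
    refine ⟨0, ?_⟩
    rintro _ ⟨J', -, rfl⟩
    positivity
  have hA' : densJ 𝒥 A ≤ ((A ∩ J).ncard : ℝ) / (J.ncard : ℝ) :=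
    csInf_le hbdd ⟨J, hIoo, rfl⟩
  have hB' : densJ 𝒥 B ≤ ((B ∩ J).ncard : ℝ) / (J.ncard : ℝ) :=
    csInf_le hbddB ⟨J, hIoo, rfl⟩
  have hsum : (J.ncard : ℝ) < ((A ∩ J).ncard : ℝ) + ((B ∩ J).ncard : ℝ) := by
    have h1 : (1 : ℝ) < ((A ∩ J).ncard : ℝ) / (J.ncard : ℝ)
        + ((B ∩ J).ncard : ℝ) / (J.ncard : ℝ) := lt_of_lt_of_le hd (by linarith)
    calc (J.ncard : ℝ) = 1 * (J.ncard : ℝ) := (one_mul _).symm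
      _ < (((A ∩ J).ncard : ℝ) / (J.ncard : ℝ)
            + ((B ∩ J).ncard : ℝ) / (J.ncard : ℝ)) * (J.ncard : ℝ) :=
          mul_lt_mul_of_pos_right h1 hJ0
      _ = ((A ∩ J).ncard : ℝ) + ((B ∩ J).ncard : ℝ) := by field_simp
  have hsumn : J.ncard < (A ∩ J).ncard + (B ∩ J).ncard := by exact_mod_cast hsum
  -- the reflected set
  set C : Set G := (fun b => x * b⁻¹) '' (B ∩ J) with hC
  have hinj : Function.Injective (fun b : G => x * b⁻¹) := fun a b h => by
    simpa using inv_injective (mul_left_cancel h)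
  have hCcard : C.ncard = (B ∩ J).ncard := Set.ncard_image_of_injective _ hinj
  have hCsub : C ⊆ J := by
    rintro _ ⟨b, ⟨-, hb1, hb2⟩, rfl⟩
    constructor
    · have := mul_lt_mul_left hb2 b⁻¹
      simpa using this
    · have : x * b⁻¹ < x * 1 := mul_lt_mul_right (by simpa using hb1) x
      simpa using this
  have hAJsub : A ∩ J ⊆ J := Set.inter_subset_right
  have hnd : ¬ Disjoint (A ∩ J) C := by
    intro hdisj
    have hU : ((A ∩ J) ∪ C).ncard = (A ∩ J).ncard + C.ncard :=
      Set.ncard_union_eq hdisj (hfin.subset hAJsub) (hfin.subset hCsub)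
    have hUle : ((A ∩ J) ∪ C).ncard ≤ J.ncard :=
      Set.ncard_le_ncard (Set.union_subset hAJsub hCsub) hfin
    omega
  obtain ⟨y, hyA, hyC⟩ := Set.not_disjoint_iff.1 hnd
  obtain ⟨b, ⟨hbB, -⟩, rfl⟩ := hyC
  exact ⟨x * b⁻¹, hyA.1, b, hbB, by group⟩
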